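/- For every real a with 2/3 < a ≤ 1, the inequality -ln(1-x) ≤ x + x²/(2(1-ax)) holds for all x with 0 ≤ x ≤ b, where b = (3a-2)/(a(2a-1)). -/

import Mathlib

theorem stmt_3 (a : ℝ) (ha1 : 2 / 3 < a) (ha2 : a ≤ 1) :
    ∀ x : ℝ, 0 ≤ x → x ≤ (3 * a - 2) / (a * (2 * a - 1)) →
      -Real.log (1 - x) ≤ x + x ^ 2 / (2 * (1 - a * x)) := by
  intro x hx0 hxb
  have ha0 : 0 < a := by linarith
  have h2a : 0 < 2 * a - 1 := by linarith
  have hden : 0 < a * (2 * a - 1) := by positivity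
  have hb1 : (3 * a - 2) / (a * (2 * a - 1)) ≤ 1 := by
    rw [div_le_one hden]; nlinarith [sq_nonneg (a - 1)]
  have hxkey : a * (2 * a - 1) * x ≤ 3 * a - 2 := by
    rw [← le_div_iff₀' hden]; exact hxb
  rcases eq_or_lt_of_le (hxb.trans hb1) with hx1 | hx1
  · -- x = 1
    rw [hx1]
    simp only [sub_self, Real.log_zero, neg_zero, one_pow, mul_one]
    have : (0:ℝ) ≤ 1 / (2 * (1 - a)) := by
      apply div_nonneg zero_le_one; nlinarith
    linarith
  · -- x < 1
    set f : ℝ → ℝ := fun y => y + y ^ 2 / (2 * (1 - a * y)) + Real.log (1 - y) with hf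
    set g : ℝ → ℝ := fun y =>
      1 + (2 * y * (2 * (1 - a * y)) - y ^ 2 * (2 * (-a))) / (2 * (1 - a * y)) ^ 2
        + (-1) / (1 - y) with hg
    have hpos : ∀ y ∈ Set.Icc (0:ℝ) x, 0 < 1 - y ∧ 0 < 1 - a * y := by
      intro y hy
      have h1 : y < 1 := lt_of_le_of_lt hy.2 hx1
      have h2 : a * y ≤ y := by nlinarith [hy.1]
      exact ⟨by linarith, by linarith⟩
    have hder : ∀ y ∈ Set.Icc (0:ℝ) x, HasDerivAt f (g y) y := by
      intro y hy
      obtain ⟨h1, h2⟩ := hpos y hy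
      have d1 : HasDerivAt (fun y : ℝ => y ^ 2) (2 * y) y := by
        simpa using hasDerivAt_pow 2 y
      have d2 : HasDerivAt (fun y : ℝ => 2 * (1 - a * y)) (2 * (-a)) y := by
        have : HasDerivAt (fun y : ℝ => 1 - a * y) (-a) y := by
          simpa using ((hasDerivAt_id y).const_mul a).const_sub 1
        simpa using this.const_mul 2
      have d3 : HasDerivAt (fun y : ℝ => y ^ 2 / (2 * (1 - a * y)))
          ((2 * y * (2 * (1 - a * y)) - y ^ 2 * (2 * (-a))) / (2 * (1 - a * y)) ^ 2) y :=
        d1.div d2 (by positivity)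
      have d4 : HasDerivAt (fun y : ℝ => Real.log (1 - y)) ((-1) / (1 - y)) y := by
        have : HasDerivAt (fun y : ℝ => 1 - y) (-1) y := by
          simpa using (hasDerivAt_id y).const_sub 1
        exact this.log (by linarith)
      exact ((hasDerivAt_id y).add d3).add d4
    have hgnn : ∀ y ∈ Set.Icc (0:ℝ) x, 0 ≤ g y := by
      intro y hy
      obtain ⟨h1, h2⟩ := hpos y hy
      have hyb : a * (2 * a - 1) * y ≤ 3 * a - 2 :=
        le_trans (by nlinarith [hy.2, hy.1]) hxkey
      have heq : g y = y ^ 2 * ((3 * a - 2) - a * (2 * a - 1) * y)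
          / (2 * (1 - a * y) ^ 2 * (1 - y)) := by
        rw [hg]
        have h1' : 1 - y ≠ 0 := ne_of_gt h1
        have h2' : 1 - a * y ≠ 0 := ne_of_gt h2
        beta_reduce
        rw [one_add_div (by positivity), div_add_div _ _ (by positivity) h1', div_eq_div_iff (by positivity) (by positivity)]
        ring
      rw [heq]
      apply div_nonneg _ (by positivity)
      exact mul_nonneg (sq_nonneg y) (by linarith)
    have hmono : MonotoneOn f (Set.Icc 0 x) := by
      apply monotoneOn_of_deriv_nonneg (convex_Icc 0 x)
      · exact fun y hy => (hder y hy).continuousAt.continuousWithinAt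
      · intro y hy
        rw [interior_Icc] at hy
        exact (hder y (Set.Ioo_subset_Icc_self hy)).differentiableAt.differentiableWithinAt
      · intro y hy
        rw [interior_Icc] at hy
        rw [(hder y (Set.Ioo_subset_Icc_self hy)).deriv]
        exact hgnn y (Set.Ioo_subset_Icc_self hy)
    have h0 : f 0 ≤ f x :=
      hmono (Set.left_mem_Icc.mpr hx0) (Set.right_mem_Icc.mpr hx0) hx0
    have hf0 : f 0 = 0 := by simp [hf]
    have : 0 ≤ x + x ^ 2 / (2 * (1 - a * x)) + Real.log (1 - x) := by
      rw [← hf0]; exact h0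
    linarith
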